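/- The group homomorphism from FreeGroup (Fin 2) × ℤ to B₃ determined by sending the two free generators to σ₁² and σ₂² respectively and sending (1 : ℤ) to Δ² = (σ₁σ₂)³ is injective, and its range equals the pure braid group P₃ = ker π. In particular, P₃ is isomorphic to F₂ × ℤ. -/

import Mathlib

/-- The braid relator `σ₁σ₂σ₁σ₂⁻¹σ₁⁻¹σ₂⁻¹` in the free group on two generators. -/
def braidRel3 : Set (FreeGroup (Fin 2)) :=
  {FreeGroup.of 0 * FreeGroup.of 1 * FreeGroup.of 0 *
    (FreeGroup.of 1)⁻¹ * (FreeGroup.of 0)⁻¹ * (FreeGroup.of 1)⁻¹}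

/-- The Artin braid group on 3 strands. -/
abbrev BraidGroup3 : Type := PresentedGroup braidRel3

/-- The standard generators σ₁, σ₂ of the braid group `B₃`. -/
def σ (i : Fin 2) : BraidGroup3 := PresentedGroup.of i

/-- The full twist Δ² = (σ₁σ₂)³. -/
def Δsq : BraidGroup3 := (σ 0 * σ 1) ^ 3

/-- The transpositions `(0 1)` and `(1 2)` in the symmetric group `S₃`. -/
def permGen : Fin 2 → Equiv.Perm (Fin 3) := ![Equiv.swap 0 1, Equiv.swap 1 2]

lemma permGen_rel : ∀ r ∈ braidRel3, FreeGroup.lift permGen r = 1 := by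
  intro r hr
  rw [braidRel3, Set.mem_singleton_iff] at hr
  subst hr
  simp only [map_mul, map_inv, FreeGroup.lift_apply_of]
  decide

/-- The projection `π : B₃ → S₃` sending `σ₁ ↦ (0 1)` and `σ₂ ↦ (1 2)`. -/
def πB3 : BraidGroup3 →* Equiv.Perm (Fin 3) := PresentedGroup.toGroup permGen_rel

lemma braid_rel : σ 0 * σ 1 * σ 0 = σ 1 * σ 0 * σ 1 := by
  have h : (PresentedGroup.mk braidRel3 (FreeGroup.of 0 * FreeGroup.of 1 * FreeGroup.of 0 *
      (FreeGroup.of 1)⁻¹ * (FreeGroup.of 0)⁻¹ * (FreeGroup.of 1)⁻¹)) = 1 := by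
    apply (QuotientGroup.eq_one_iff _).mpr
    exact Subgroup.subset_normalClosure rfl
  simp only [map_mul, map_inv] at h
  have h2 : σ 0 * σ 1 * σ 0 * (σ 1 * σ 0 * σ 1)⁻¹ = 1 := by
    rw [← h]; unfold σ PresentedGroup.of; group
  rw [mul_inv_eq_one] at h2
  exact h2

namespace BA
noncomputable def a : BraidGroup3 := σ 0
noncomputable def b : BraidGroup3 := σ 1

lemma hbr : a * b * a = b * a * b := braid_rel

lemma hΔ : Δsq = a * b * a * (a * b * a) := by
  show (a * b)^3 = _
  rw [show a*b*a*(a*b*a) = a*b*a*(b*a*b) by rw [hbr]]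
  simp [pow_succ, mul_assoc]

lemma hDa : a * b * a * a = b * (a * b * a) := by
  conv_lhs => rw [hbr]
  simp [mul_assoc]

lemma hDb : a * b * a * b = a * (a * b * a) := by
  calc a*b*a*b = a*(b*a*b) := by simp [mul_assoc]
    _ = a*(a*b*a) := by rw [← hbr]

lemma hcomm_a : Commute a Δsq := by
  have h1 : Δsq * a = a * Δsq := by
    rw [hΔ, show a*b*a*(a*b*a)*a = a*b*a*(a*b*a*a) by simp [mul_assoc],
       hDa, show a*b*a*(b*(a*b*a)) = a*b*a*b*(a*b*a) by simp [mul_assoc], hDb]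
    simp [mul_assoc]
  exact h1.symm

lemma hcomm_b : Commute b Δsq := by
  have h1 : Δsq * b = b * Δsq := by
    rw [hΔ, show a*b*a*(a*b*a)*b = a*b*a*(a*b*a*b) by simp [mul_assoc],
       hDb, show a*b*a*(a*(a*b*a)) = a*b*a*a*(a*b*a) by simp [mul_assoc], hDa]
    simp [mul_assoc]
  exact h1.symm

-- Δ² = a²ba²b : ababab = a(bab)ab = a(aba)ab
lemma k1 : Δsq = a^2 * b * a^2 * b := by
  have : Δsq = a * (b*a*b) * (a * b) := by
    show (a*b)^3 = _
    simp [pow_succ, mul_assoc]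
  rw [this, ← hbr]
  simp [pow_two, mul_assoc]

-- Δ² = ab²ab² : ababab = ab(aba)b = ab(bab)b
lemma k2 : Δsq = a * b^2 * a * b^2 := by
  have : Δsq = a * b * (a*b*a) * b := by
    show (a*b)^3 = _
    simp [pow_succ, mul_assoc]
  rw [this, hbr]
  simp [pow_two, mul_assoc]

end BA

abbrev SL2 := Matrix.SpecialLinearGroup (Fin 2) ℤ

def MA : SL2 := ⟨!![1,1;0,1], by simp [Matrix.det_fin_two_of]⟩
def MB : SL2 := ⟨!![1,0;-1,1], by simp [Matrix.det_fin_two_of]⟩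
def MA2 : SL2 := ⟨!![1,2;0,1], by simp [Matrix.det_fin_two_of]⟩
def MB2 : SL2 := ⟨!![1,0;-2,1], by simp [Matrix.det_fin_two_of]⟩
def MC : SL2 := ⟨!![-1,0;0,-1], by simp [Matrix.det_fin_two_of]⟩

lemma hbraidM : MA * MB * MA = MB * MA * MB := by
  apply Subtype.ext
  simp only [Matrix.SpecialLinearGroup.coe_mul]
  simp [MA, MB, Matrix.SpecialLinearGroup.coe_mul, Matrix.mul_fin_two]

lemma hMA2 : MA * MA = MA2 := by
  apply Subtype.ext
  simp only [Matrix.SpecialLinearGroup.coe_mul]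
  simp [MA, MA2, Matrix.SpecialLinearGroup.coe_mul, Matrix.mul_fin_two]

lemma hMB2 : MB * MB = MB2 := by
  apply Subtype.ext
  simp only [Matrix.SpecialLinearGroup.coe_mul]
  simp [MB, MB2, Matrix.SpecialLinearGroup.coe_mul, Matrix.mul_fin_two]

lemma hMC : (MA * MB)^3 = MC := by
  rw [pow_succ, pow_succ, pow_one]
  apply Subtype.ext
  simp only [Matrix.SpecialLinearGroup.coe_mul]
  simp [MA, MB, MC, Matrix.SpecialLinearGroup.coe_mul, Matrix.mul_fin_two]

lemma hMC2 : MC * MC = 1 := by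
  apply Subtype.ext
  simp only [Matrix.SpecialLinearGroup.coe_mul]
  simp [MC, Matrix.SpecialLinearGroup.coe_mul, Matrix.mul_fin_two]
  rw [show (1 : Matrix (Fin 2) (Fin 2) ℤ) = !![1,0;0,1] by rw [Matrix.one_fin_two]]

-- the action of SL2 on nonzero integer vectors
def V : Type := {v : Fin 2 → ℤ // v ≠ 0}

lemma mulVec_ne_zero (g : SL2) {v : Fin 2 → ℤ} (hv : v ≠ 0) :
    (g : Matrix (Fin 2) (Fin 2) ℤ).mulVec v ≠ 0 := by
  intro h
  apply hv
  have : ((g⁻¹ : SL2) : Matrix (Fin 2) (Fin 2) ℤ).mulVec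
      ((g : Matrix (Fin 2) (Fin 2) ℤ).mulVec v) = 0 := by
    rw [h, Matrix.mulVec_zero]
  rwa [Matrix.mulVec_mulVec, ← Matrix.SpecialLinearGroup.coe_mul, inv_mul_cancel,
    Matrix.SpecialLinearGroup.coe_one, Matrix.one_mulVec] at this

instance : MulAction SL2 V where
  smul g v := ⟨(g : Matrix (Fin 2) (Fin 2) ℤ).mulVec v.1, mulVec_ne_zero g v.2⟩
  one_smul v := by
    apply Subtype.ext
    show ((1 : SL2) : Matrix (Fin 2) (Fin 2) ℤ).mulVec v.1 = v.1
    rw [Matrix.SpecialLinearGroup.coe_one, Matrix.one_mulVec]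
  mul_smul g h v := by
    apply Subtype.ext
    show ((g * h : SL2) : Matrix (Fin 2) (Fin 2) ℤ).mulVec v.1 = _
    rw [Matrix.SpecialLinearGroup.coe_mul, ← Matrix.mulVec_mulVec]
    rfl

lemma smul_def (g : SL2) (v : V) :
    (g • v).1 = (g : Matrix (Fin 2) (Fin 2) ℤ).mulVec v.1 := rfl

lemma MA2_smul (v : V) : (MA2 • v).1 = ![v.1 0 + 2 * v.1 1, v.1 1] := by
  rw [smul_def]
  funext i
  fin_cases i <;>
    simp [MA2, Matrix.mulVec, dotProduct, Fin.sum_univ_two] <;> ring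

def MA2' : SL2 := ⟨!![1,-2;0,1], by simp [Matrix.det_fin_two_of]⟩
def MB2' : SL2 := ⟨!![1,0;2,1], by simp [Matrix.det_fin_two_of]⟩

lemma hMA2inv : MA2⁻¹ = MA2' := by
  apply inv_eq_of_mul_eq_one_left
  apply Subtype.ext
  simp only [Matrix.SpecialLinearGroup.coe_mul]
  simp [MA2, MA2', Matrix.SpecialLinearGroup.coe_mul, Matrix.mul_fin_two]
  rw [show (1 : Matrix (Fin 2) (Fin 2) ℤ) = !![1,0;0,1] by rw [Matrix.one_fin_two]]

lemma hMB2inv : MB2⁻¹ = MB2' := by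
  apply inv_eq_of_mul_eq_one_left
  apply Subtype.ext
  simp only [Matrix.SpecialLinearGroup.coe_mul]
  simp [MB2, MB2', Matrix.SpecialLinearGroup.coe_mul, Matrix.mul_fin_two]
  rw [show (1 : Matrix (Fin 2) (Fin 2) ℤ) = !![1,0;0,1] by rw [Matrix.one_fin_two]]

lemma MA2_inv_smul (v : V) : (MA2⁻¹ • v).1 = ![v.1 0 - 2 * v.1 1, v.1 1] := by
  rw [hMA2inv, smul_def]
  funext i
  fin_cases i <;>
    simp [MA2', Matrix.mulVec, dotProduct, Fin.sum_univ_two] <;> ring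

lemma MB2_smul (v : V) : (MB2 • v).1 = ![v.1 0, v.1 1 - 2 * v.1 0] := by
  rw [smul_def]
  funext i
  fin_cases i <;>
    simp [MB2, Matrix.mulVec, dotProduct, Fin.sum_univ_two] <;> ring

lemma MB2_inv_smul (v : V) : (MB2⁻¹ • v).1 = ![v.1 0, v.1 1 + 2 * v.1 0] := by
  rw [hMB2inv, smul_def]
  funext i
  fin_cases i <;>
    simp [MB2', Matrix.mulVec, dotProduct, Fin.sum_univ_two] <;> ring


def X0 : Set V := {v | v.1 1 = 0 ∨ v.1 1 ^ 2 < v.1 0 * v.1 1}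
def X1 : Set V := {v | v.1 0 = 0 ∨ v.1 0 * v.1 1 < -(v.1 0 ^ 2)}
def Y0 : Set V := {v | v.1 1 ≠ 0 ∧ v.1 0 * v.1 1 ≤ -(v.1 1 ^ 2)}
def Y1 : Set V := {v | v.1 0 ≠ 0 ∧ v.1 0 ^ 2 ≤ v.1 0 * v.1 1}

lemma vne (v : V) : v.1 0 ≠ 0 ∨ v.1 1 ≠ 0 := by
  by_contra h
  push_neg at h
  exact v.2 (funext fun i => by fin_cases i <;> simp [h.1, h.2])

lemma dX0X1 : Disjoint X0 X1 := by
  rw [Set.disjoint_left]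
  intro v h1 h2
  simp only [X0, X1, Set.mem_setOf_eq] at h1 h2
  rcases h1 with h1 | h1 <;> rcases h2 with h2 | h2
  · rcases vne v with h | h <;> [exact h h2; exact h h1]
  · rw [h1] at h2; nlinarith [sq_nonneg (v.1 0)]
  · rw [h2] at h1; nlinarith [sq_nonneg (v.1 1)]
  · nlinarith [sq_nonneg (v.1 0), sq_nonneg (v.1 1)]

lemma dY0Y1 : Disjoint Y0 Y1 := by
  rw [Set.disjoint_left]
  intro v h1 h2
  simp only [Y0, Y1, Set.mem_setOf_eq] at h1 h2
  nlinarith [sq_pos_of_ne_zero h1.1, sq_pos_of_ne_zero h2.1]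

lemma dX0Y0 : Disjoint X0 Y0 := by
  rw [Set.disjoint_left]
  intro v h1 h2
  simp only [X0, Y0, Set.mem_setOf_eq] at h1 h2
  rcases h1 with h1 | h1
  · exact h2.1 h1
  · nlinarith [sq_pos_of_ne_zero h2.1]

lemma dX0Y1 : Disjoint X0 Y1 := by
  rw [Set.disjoint_left]
  intro v h1 h2
  simp only [X0, Y1, Set.mem_setOf_eq] at h1 h2
  obtain ⟨h2, h2'⟩ := h2
  rcases h1 with h1 | h1
  · rw [h1, mul_zero] at h2'; nlinarith [sq_pos_of_ne_zero h2]
  · have hy : v.1 1 ≠ 0 := by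
      intro h; rw [h] at h1; simp at h1
    nlinarith [sq_pos_of_ne_zero h2, sq_pos_of_ne_zero hy]

lemma dX1Y0 : Disjoint X1 Y0 := by
  rw [Set.disjoint_left]
  intro v h1 h2
  simp only [X1, Y0, Set.mem_setOf_eq] at h1 h2
  obtain ⟨h2, h2'⟩ := h2
  rcases h1 with h1 | h1
  · rw [h1, zero_mul] at h2'; nlinarith [sq_pos_of_ne_zero h2]
  · have hx : v.1 0 ≠ 0 := by
      intro h; rw [h] at h1; simp at h1
    nlinarith [sq_pos_of_ne_zero h2, sq_pos_of_ne_zero hx]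

lemma dX1Y1 : Disjoint X1 Y1 := by
  rw [Set.disjoint_left]
  intro v h1 h2
  simp only [X1, Y1, Set.mem_setOf_eq] at h1 h2
  rcases h1 with h1 | h1
  · exact h2.1 h1
  · nlinarith [sq_pos_of_ne_zero h2.1]

lemma hXstep0 {v : V} (hv : v ∉ Y0) : MA2 • v ∈ X0 := by
  have e0 : (MA2 • v).1 0 = v.1 0 + 2 * v.1 1 := by rw [MA2_smul v]; rfl
  have e1 : (MA2 • v).1 1 = v.1 1 := by rw [MA2_smul v]; rfl
  simp only [Y0, Set.mem_setOf_eq, not_and, not_le, ne_eq, not_not] at hv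
  show (MA2 • v).1 1 = 0 ∨ (MA2 • v).1 1 ^ 2 < (MA2 • v).1 0 * (MA2 • v).1 1
  rw [e0, e1]
  by_cases h : v.1 1 = 0
  · exact Or.inl h
  · right; have := hv h; nlinarith

lemma hYstep0 {v : V} (hv : v ∉ X0) : MA2⁻¹ • v ∈ Y0 := by
  have e0 : (MA2⁻¹ • v).1 0 = v.1 0 - 2 * v.1 1 := by rw [MA2_inv_smul v]; rfl
  have e1 : (MA2⁻¹ • v).1 1 = v.1 1 := by rw [MA2_inv_smul v]; rfl
  simp only [X0, Set.mem_setOf_eq, not_or, not_lt] at hv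
  show (MA2⁻¹ • v).1 1 ≠ 0 ∧ (MA2⁻¹ • v).1 0 * (MA2⁻¹ • v).1 1 ≤ -((MA2⁻¹ • v).1 1 ^ 2)
  rw [e0, e1]
  exact ⟨hv.1, by nlinarith [hv.2]⟩

lemma hXstep1 {v : V} (hv : v ∉ Y1) : MB2 • v ∈ X1 := by
  have e0 : (MB2 • v).1 0 = v.1 0 := by rw [MB2_smul v]; rfl
  have e1 : (MB2 • v).1 1 = v.1 1 - 2 * v.1 0 := by rw [MB2_smul v]; rfl
  simp only [Y1, Set.mem_setOf_eq, not_and, not_le, ne_eq, not_not] at hv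
  show (MB2 • v).1 0 = 0 ∨ (MB2 • v).1 0 * (MB2 • v).1 1 < -((MB2 • v).1 0 ^ 2)
  rw [e0, e1]
  by_cases h : v.1 0 = 0
  · exact Or.inl h
  · right; have := hv h; nlinarith

lemma hYstep1 {v : V} (hv : v ∉ X1) : MB2⁻¹ • v ∈ Y1 := by
  have e0 : (MB2⁻¹ • v).1 0 = v.1 0 := by rw [MB2_inv_smul v]; rfl
  have e1 : (MB2⁻¹ • v).1 1 = v.1 1 + 2 * v.1 0 := by rw [MB2_inv_smul v]; rfl
  simp only [X1, Set.mem_setOf_eq, not_or, not_lt] at hv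
  show (MB2⁻¹ • v).1 0 ≠ 0 ∧ (MB2⁻¹ • v).1 0 ^ 2 ≤ (MB2⁻¹ • v).1 0 * (MB2⁻¹ • v).1 1
  rw [e0, e1]
  exact ⟨hv.1, by nlinarith [hv.2]⟩

open Pointwise in
theorem sanov_injective : Function.Injective (FreeGroup.lift (![MA2, MB2] : Fin 2 → SL2)) := by
  apply FreeGroup.injective_lift_of_ping_pong (α := V) (X := ![X0, X1]) (Y := ![Y0, Y1])
  · intro i
    fin_cases i
    · exact ⟨⟨![1,0], by intro h; simpa using congrFun h 0⟩, Or.inl rfl⟩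
    · exact ⟨⟨![0,1], by intro h; simpa using congrFun h 1⟩, Or.inl rfl⟩
  · intro i j hij
    fin_cases i <;> fin_cases j <;>
      simp only [Fin.zero_eta, Fin.mk_one, Function.onFun, Matrix.cons_val_zero,
        Matrix.cons_val_one, Matrix.head_cons, ne_eq] at hij ⊢ <;>
      first
      | exact absurd trivial hij
      | exact dX0X1
      | exact dX0X1.symm
  · intro i j hij
    fin_cases i <;> fin_cases j <;>
      simp only [Fin.zero_eta, Fin.mk_one, Function.onFun, Matrix.cons_val_zero,
        Matrix.cons_val_one, Matrix.head_cons, ne_eq] at hij ⊢ <;>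
      first
      | exact absurd trivial hij
      | exact dY0Y1
      | exact dY0Y1.symm
  · intro i j
    fin_cases i <;> fin_cases j <;>
      simp only [Fin.zero_eta, Fin.mk_one, Matrix.cons_val_zero,
        Matrix.cons_val_one, Matrix.head_cons]
    · exact dX0Y0
    · exact dX0Y1
    · exact dX1Y0
    · exact dX1Y1
  · intro i
    fin_cases i <;>
      simp only [Fin.zero_eta, Fin.mk_one, Matrix.cons_val_zero, Matrix.cons_val_one,
        Matrix.head_cons] <;>
      rintro w ⟨v, hv, rfl⟩
    · exact hXstep0 hv
    · exact hXstep1 hv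
  · intro i
    fin_cases i <;>
      simp only [Fin.zero_eta, Fin.mk_one, Matrix.cons_val_zero, Matrix.cons_val_one,
        Matrix.head_cons, Pi.inv_apply] <;>
      rintro w ⟨v, hv, rfl⟩
    · exact hYstep0 hv
    · exact hYstep1 hv

abbrev SL4 := Matrix.SpecialLinearGroup (Fin 2) (ZMod 4)


def A4 : SL4 := ⟨!![1,2;0,1], by decide⟩
def B4 : SL4 := ⟨!![1,0;2,1], by decide⟩
def C4 : SL4 := ⟨!![1,2;2,1], by decide⟩
def N4 : SL4 := ⟨!![3,0;0,3], by decide⟩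

instance : DecidableEq (Matrix (Fin 2) (Fin 2) (ZMod 4)) :=
  inferInstanceAs (DecidableEq (Fin 2 → Fin 2 → ZMod 4))

instance : DecidableEq SL4 := Subtype.instDecidableEq

def map4 : SL2 →* SL4 := Matrix.SpecialLinearGroup.map (Int.castRingHom (ZMod 4))

lemma map4_MA2 : map4 MA2 = A4 := by decide
lemma map4_MB2 : map4 MB2 = B4 := by decide
lemma map4_MC : map4 MC = N4 := by decide

def K : Subgroup SL4 where
  carrier := {1, A4, B4, C4}
  one_mem' := by left; rfl
  mul_mem' := by
    rintro x y (rfl | rfl | rfl | rfl) (rfl | rfl | rfl | rfl) <;> decide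
  inv_mem' := by
    rintro x (rfl | rfl | rfl | rfl) <;> decide

lemma N4_not_mem_K : N4 ∉ K := by
  intro h
  rcases h with h | h | h | h <;> revert h <;> decide

-- The representation ρ : B₃ → SL(2,ℤ)
lemma rhoRel : ∀ r ∈ braidRel3, FreeGroup.lift (![MA, MB] : Fin 2 → SL2) r = 1 := by
  intro r hr
  rw [braidRel3, Set.mem_singleton_iff] at hr
  subst hr
  simp only [map_mul, map_inv, FreeGroup.lift_apply_of]
  rw [show ((![MA, MB] : Fin 2 → SL2) 0) = MA from rfl,
      show ((![MA, MB] : Fin 2 → SL2) 1) = MB from rfl, hbraidM]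
  group

def ρ : BraidGroup3 →* SL2 := PresentedGroup.toGroup rhoRel

lemma ρ_σ0 : ρ (σ 0) = MA := PresentedGroup.toGroup.of rhoRel
lemma ρ_σ1 : ρ (σ 1) = MB := PresentedGroup.toGroup.of rhoRel

lemma ρ_Δsq : ρ Δsq = MC := by
  show ρ ((σ 0 * σ 1)^3) = MC
  rw [map_pow, map_mul, ρ_σ0, ρ_σ1, hMC]

lemma ρ_lift (w : FreeGroup (Fin 2)) :
    ρ (FreeGroup.lift (fun i => σ i ^ 2) w) = FreeGroup.lift (![MA2, MB2] : Fin 2 → SL2) w := by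
  have h : ρ.comp (FreeGroup.lift (fun i => σ i ^ 2)) =
      FreeGroup.lift (![MA2, MB2] : Fin 2 → SL2) := by
    apply FreeGroup.ext_hom
    intro i
    rw [MonoidHom.comp_apply, FreeGroup.lift_apply_of, FreeGroup.lift_apply_of]
    fin_cases i
    · show ρ (σ 0 ^ 2) = MA2
      rw [map_pow, ρ_σ0, pow_two, hMA2]
    · show ρ (σ 1 ^ 2) = MB2
      rw [map_pow, ρ_σ1, pow_two, hMB2]
  calc ρ (FreeGroup.lift (fun i => σ i ^ 2) w)
      = (ρ.comp (FreeGroup.lift (fun i => σ i ^ 2))) w := rfl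
    _ = _ := by rw [h]

-- The abelianization homomorphism χ : B₃ → Multiplicative ℤ
lemma chiRel : ∀ r ∈ braidRel3,
    FreeGroup.lift (fun _ : Fin 2 => Multiplicative.ofAdd (1:ℤ)) r = 1 := by
  intro r hr
  rw [braidRel3, Set.mem_singleton_iff] at hr
  subst hr
  simp only [map_mul, map_inv, FreeGroup.lift_apply_of]
  group

def χ : BraidGroup3 →* Multiplicative ℤ := PresentedGroup.toGroup chiRel

lemma χ_Δsq : χ Δsq = Multiplicative.ofAdd (6:ℤ) := by
  show χ ((σ 0 * σ 1)^3) = _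
  rw [map_pow, map_mul]
  rw [show χ (σ 0) = Multiplicative.ofAdd (1:ℤ) from PresentedGroup.toGroup.of chiRel,
      show χ (σ 1) = Multiplicative.ofAdd (1:ℤ) from PresentedGroup.toGroup.of chiRel]
  decide

lemma MC_inv : MC⁻¹ = MC := inv_eq_of_mul_eq_one_left hMC2

lemma map4_lift (w : FreeGroup (Fin 2)) :
    map4 (FreeGroup.lift (![MA2, MB2] : Fin 2 → SL2) w) ∈ K := by
  have h : map4.comp (FreeGroup.lift (![MA2, MB2] : Fin 2 → SL2)) =
      FreeGroup.lift (![A4, B4] : Fin 2 → SL4) := by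
    apply FreeGroup.ext_hom
    intro i
    rw [MonoidHom.comp_apply, FreeGroup.lift_apply_of, FreeGroup.lift_apply_of]
    fin_cases i
    · exact map4_MA2
    · exact map4_MB2
  have h2 : map4 (FreeGroup.lift (![MA2, MB2] : Fin 2 → SL2) w) =
      FreeGroup.lift (![A4, B4] : Fin 2 → SL4) w := by
    calc map4 (FreeGroup.lift (![MA2, MB2] : Fin 2 → SL2) w)
        = (map4.comp (FreeGroup.lift (![MA2, MB2] : Fin 2 → SL2))) w := rfl
      _ = _ := by rw [h]
  rw [h2]
  have : (FreeGroup.lift (![A4, B4] : Fin 2 → SL4)).range ≤ K := by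
    rw [FreeGroup.range_lift_eq_closure]
    apply Subgroup.closure_le K |>.mpr
    rintro g ⟨i, rfl⟩
    fin_cases i
    · exact Or.inr (Or.inl rfl)
    · exact Or.inr (Or.inr (Or.inl rfl))
  exact this ⟨w, rfl⟩

namespace BA

lemma central : ∀ g : BraidGroup3, Commute g Δsq := by
  intro g
  have hg : g ∈ Subgroup.closure (Set.range (σ : Fin 2 → BraidGroup3)) := by
    rw [show (σ : Fin 2 → BraidGroup3) = PresentedGroup.of from rfl,
      PresentedGroup.closure_range_of]
    trivial
  induction hg using Subgroup.closure_induction with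
  | mem x hx =>
    obtain ⟨i, rfl⟩ := hx
    fin_cases i
    · exact hcomm_a
    · exact hcomm_b
  | one => exact Commute.one_left _
  | mul x y _ _ hx hy => exact hx.mul_left hy
  | inv x _ hx => exact hx.inv_left

noncomputable def φ : FreeGroup (Fin 2) × Multiplicative ℤ →* BraidGroup3 :=
  (FreeGroup.lift (fun i => σ i ^ 2)).noncommCoprod (zpowersHom _ Δsq)
    (fun _ n => ((central _).zpow_right n.toAdd))

lemma φ_apply (w : FreeGroup (Fin 2)) (n : Multiplicative ℤ) :
    φ (w, n) = FreeGroup.lift (fun i => σ i ^ 2) w * Δsq ^ n.toAdd := rfl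

lemma φ_eval0 : φ (FreeGroup.of 0, 1) = σ 0 ^ 2 := by
  rw [φ_apply]; simp

lemma φ_eval1 : φ (FreeGroup.of 1, 1) = σ 1 ^ 2 := by
  rw [φ_apply]; simp

lemma φ_evalΔ : φ (1, Multiplicative.ofAdd 1) = Δsq := by
  rw [φ_apply]; simp

lemma π_σ (i : Fin 2) : πB3 (σ i) = permGen i := PresentedGroup.toGroup.of permGen_rel

lemma π_sq (i : Fin 2) : πB3 (σ i ^ 2) = 1 := by
  rw [map_pow, π_σ]
  fin_cases i <;> decide

lemma π_Δsq : πB3 Δsq = 1 := by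
  show πB3 ((σ 0 * σ 1)^3) = 1
  rw [map_pow, map_mul, π_σ, π_σ]
  decide

lemma range_le_ker : φ.range ≤ πB3.ker := by
  rintro g ⟨⟨w, n⟩, rfl⟩
  rw [MonoidHom.mem_ker, φ_apply, map_mul, map_zpow, π_Δsq, one_zpow, mul_one]
  have : πB3.comp (FreeGroup.lift (fun i => σ i ^ 2)) = 1 := by
    ext i
    simp [π_sq]
  calc πB3 (FreeGroup.lift (fun i => σ i ^ 2) w)
      = (πB3.comp (FreeGroup.lift (fun i => σ i ^ 2))) w := rfl
    _ = 1 := by rw [this]; rfl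

end BA
namespace BA

lemma hxR : a^2 ∈ φ.range := ⟨(FreeGroup.of 0, 1), φ_eval0⟩
lemma hyR : b^2 ∈ φ.range := ⟨(FreeGroup.of 1, 1), φ_eval1⟩
lemma hzR : Δsq ∈ φ.range := ⟨(1, Multiplicative.ofAdd 1), φ_evalΔ⟩

-- step identities, right multiplication by a
lemma sa5 : (b*a) * a = ((a^2)⁻¹ * Δsq * (b^2)⁻¹) * b := by
  rw [k1]; group; rw [zpow_two, mul_assoc]

lemma sa6 : (a*b*a) * a = b^2 * (a*b) := by
  have h : a*b*a*a = b*(a*b*a) := hDa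
  rw [h, hbr]
  simp [pow_two, mul_assoc]

-- step identities, right multiplication by b
lemma sb4 : (a*b) * b = (Δsq * (b^2)⁻¹ * (a^2)⁻¹) * a := by
  rw [k2]; group; rw [zpow_two, mul_assoc]

lemma sb5 : (b*a) * b = 1 * (a*b*a) := by rw [one_mul, hbr]

lemma sb6 : (a*b*a) * b = a^2 * (b*a) := by
  rw [hDb]; simp [pow_two, mul_assoc]

lemma inv_step {t₁ c R t₂ : BraidGroup3} (h : t₁ * c = R * t₂) :
    t₂ * c⁻¹ = R⁻¹ * t₁ := by
  have h2 : t₂ = R⁻¹ * (t₁ * c) := by rw [h]; group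
  rw [h2]; group

def T : Set BraidGroup3 := {1, a, b, a*b, b*a, a*b*a}

lemma exists_decomp (g : BraidGroup3) :
    ∃ r ∈ φ.range, ∃ t ∈ T, g = r * t := by
  have hg : g ∈ Subgroup.closure (Set.range (σ : Fin 2 → BraidGroup3)) := by
    rw [show (σ : Fin 2 → BraidGroup3) = PresentedGroup.of from rfl,
      PresentedGroup.closure_range_of]
    trivial
  induction hg using Subgroup.closure_induction_right with
  | one => exact ⟨1, one_mem _, 1, Or.inl rfl, by simp⟩
  | mul_right x hx c hc ih =>
    obtain ⟨r, hr, t, ht, rfl⟩ := ih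
    obtain ⟨i, rfl⟩ := hc
    have hstep : ∃ R ∈ φ.range, ∃ t' ∈ T, t * σ i = R * t' := by
      fin_cases i
      · -- c = a
        rcases ht with rfl | rfl | rfl | rfl | rfl | rfl
        · exact ⟨1, one_mem _, a, Or.inr (Or.inl rfl), by simp [a]⟩
        · exact ⟨a^2, hxR, 1, Or.inl rfl, by simp [a, pow_two]⟩
        · exact ⟨1, one_mem _, b*a, Or.inr (Or.inr (Or.inr (Or.inr (Or.inl rfl)))), by simp [a]⟩
        · exact ⟨1, one_mem _, a*b*a, Or.inr (Or.inr (Or.inr (Or.inr (Or.inr rfl)))), by simp [a]⟩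
        · exact ⟨(a^2)⁻¹ * Δsq * (b^2)⁻¹,
            mul_mem (mul_mem (inv_mem hxR) hzR) (inv_mem hyR),
            b, Or.inr (Or.inr (Or.inl rfl)), sa5⟩
        · exact ⟨b^2, hyR, a*b, Or.inr (Or.inr (Or.inr (Or.inl rfl))), sa6⟩
      · -- c = b
        rcases ht with rfl | rfl | rfl | rfl | rfl | rfl
        · exact ⟨1, one_mem _, b, Or.inr (Or.inr (Or.inl rfl)), by simp [b]⟩
        · exact ⟨1, one_mem _, a*b, Or.inr (Or.inr (Or.inr (Or.inl rfl))), by simp [b]⟩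
        · exact ⟨b^2, hyR, 1, Or.inl rfl, by simp [b, pow_two]⟩
        · exact ⟨Δsq * (b^2)⁻¹ * (a^2)⁻¹,
            mul_mem (mul_mem hzR (inv_mem hyR)) (inv_mem hxR),
            a, Or.inr (Or.inl rfl), sb4⟩
        · exact ⟨1, one_mem _, a*b*a, Or.inr (Or.inr (Or.inr (Or.inr (Or.inr rfl)))), sb5⟩
        · exact ⟨a^2, hxR, b*a, Or.inr (Or.inr (Or.inr (Or.inr (Or.inl rfl)))), sb6⟩
    obtain ⟨R, hR, t', ht', hstep⟩ := hstep
    exact ⟨r * R, mul_mem hr hR, t', ht', by rw [mul_assoc, hstep, ← mul_assoc]⟩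
  | mul_inv_cancel x hx c hc ih =>
    obtain ⟨r, hr, t, ht, rfl⟩ := ih
    obtain ⟨i, rfl⟩ := hc
    have hstep : ∃ R ∈ φ.range, ∃ t' ∈ T, t * (σ i)⁻¹ = R * t' := by
      fin_cases i
      · -- c = a⁻¹
        rcases ht with rfl | rfl | rfl | rfl | rfl | rfl
        · exact ⟨(a^2)⁻¹, inv_mem hxR, a, Or.inr (Or.inl rfl),
            inv_step (show a * a = a^2 * 1 by simp [pow_two])⟩
        · exact ⟨1, one_mem _, 1, Or.inl rfl, by simp [a]⟩
        · exact ⟨((a^2)⁻¹ * Δsq * (b^2)⁻¹)⁻¹,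
            inv_mem (mul_mem (mul_mem (inv_mem hxR) hzR) (inv_mem hyR)),
            b*a, Or.inr (Or.inr (Or.inr (Or.inr (Or.inl rfl)))), inv_step sa5⟩
        · exact ⟨(b^2)⁻¹, inv_mem hyR, a*b*a,
            Or.inr (Or.inr (Or.inr (Or.inr (Or.inr rfl)))), inv_step sa6⟩
        · exact ⟨1, one_mem _, b, Or.inr (Or.inr (Or.inl rfl)),
            by rw [one_mul]; show b*a*a⁻¹ = b; group⟩
        · exact ⟨1, one_mem _, a*b, Or.inr (Or.inr (Or.inr (Or.inl rfl))),
            by rw [one_mul]; show a*b*a*a⁻¹ = a*b; group⟩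
      · -- c = b⁻¹
        rcases ht with rfl | rfl | rfl | rfl | rfl | rfl
        · exact ⟨(b^2)⁻¹, inv_mem hyR, b, Or.inr (Or.inr (Or.inl rfl)),
            inv_step (show b * b = b^2 * 1 by simp [pow_two])⟩
        · exact ⟨(Δsq * (b^2)⁻¹ * (a^2)⁻¹)⁻¹,
            inv_mem (mul_mem (mul_mem hzR (inv_mem hyR)) (inv_mem hxR)),
            a*b, Or.inr (Or.inr (Or.inr (Or.inl rfl))), inv_step sb4⟩
        · exact ⟨1, one_mem _, 1, Or.inl rfl, by simp [b]⟩
        · exact ⟨1, one_mem _, a, Or.inr (Or.inl rfl),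
            by rw [one_mul]; show a*b*b⁻¹ = a; group⟩
        · exact ⟨(a^2)⁻¹, inv_mem hxR, a*b*a,
            Or.inr (Or.inr (Or.inr (Or.inr (Or.inr rfl)))), inv_step sb6⟩
        · exact ⟨1, one_mem _, b*a, Or.inr (Or.inr (Or.inr (Or.inr (Or.inl rfl)))),
            by rw [one_mul]; show a*b*a*b⁻¹ = b*a
               have h := inv_step sb5; simpa using h⟩
    obtain ⟨R, hR, t', ht', hstep⟩ := hstep
    exact ⟨r * R, mul_mem hr hR, t', ht', by rw [mul_assoc, hstep, ← mul_assoc]⟩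

lemma range_eq_ker : φ.range = πB3.ker := by
  apply le_antisymm range_le_ker
  intro g hg
  obtain ⟨r, hr, t, ht, rfl⟩ := exists_decomp g
  have hπr : πB3 r = 1 := range_le_ker hr
  have hπt : πB3 t = 1 := by
    have := MonoidHom.mem_ker.mp hg
    rw [map_mul, hπr, one_mul] at this
    exact this
  have ha : πB3 a = Equiv.swap 0 1 := by
    have := π_σ 0; simpa [a, permGen] using this
  have hb : πB3 b = Equiv.swap 1 2 := by
    have := π_σ 1; simpa [b, permGen] using this
  have ht1 : t = 1 := by
    rcases ht with rfl | rfl | rfl | rfl | rfl | rfl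
    · rfl
    · rw [ha] at hπt; exact absurd hπt (by decide)
    · rw [hb] at hπt; exact absurd hπt (by decide)
    · rw [map_mul, ha, hb] at hπt; exact absurd hπt (by decide)
    · rw [map_mul, hb, ha] at hπt; exact absurd hπt (by decide)
    · rw [map_mul, map_mul, ha, hb] at hπt; exact absurd hπt (by decide)
  rw [ht1, mul_one]
  exact hr

end BA
namespace BA

lemma φ_injective : Function.Injective φ := by
  apply (injective_iff_map_eq_one φ).mpr
  rintro ⟨w, n⟩ h
  rw [φ_apply] at h
  set N := Multiplicative.toAdd n with hN
  have h2 : FreeGroup.lift (![MA2, MB2] : Fin 2 → SL2) w * MC ^ N = 1 := by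
    have := congrArg ρ h
    rwa [map_mul, map_zpow, ρ_Δsq, ρ_lift, map_one] at this
  have hMC2' : MC ^ (2:ℤ) = 1 := by rw [zpow_two]; exact hMC2
  have hw : FreeGroup.lift (![MA2, MB2] : Fin 2 → SL2) w = (MC ^ N)⁻¹ := by
    rw [eq_inv_iff_mul_eq_one]; exact h2
  rcases Int.even_or_odd N with ⟨m, hm⟩ | ⟨m, hm⟩
  · -- N even : MC ^ N = 1, so w = 1 and then N = 0
    have hpow : MC ^ N = 1 := by
      rw [hm, show m + m = 2 * m by ring, zpow_mul, hMC2', one_zpow]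
    rw [hpow, inv_one] at hw
    have hw1 : w = 1 := by
      apply sanov_injective
      rw [hw, map_one]
    subst hw1
    rw [map_one, one_mul] at h
    have h6 : Multiplicative.ofAdd (N • (6:ℤ)) = Multiplicative.ofAdd (0:ℤ) := by
      have hχ := congrArg χ h
      rw [map_zpow, χ_Δsq, map_one] at hχ
      rw [ofAdd_zsmul]
      simpa using hχ
    have hN0 : N = 0 := by
      have h7 := Multiplicative.ofAdd.injective h6
      simp only [smul_eq_mul] at h7
      omega
    have hn : n = (1 : Multiplicative ℤ) := by
      have h0 : Multiplicative.toAdd n = Multiplicative.toAdd (1 : Multiplicative ℤ) := by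
        rw [toAdd_one]; exact hN0
      exact Multiplicative.toAdd.injective h0
    rw [hn]
    rfl
  · -- N odd : lift w = MC, contradiction mod 4
    exfalso
    have hpow : MC ^ N = MC := by
      rw [hm, zpow_add, zpow_mul, hMC2', one_zpow, one_mul, zpow_one]
    rw [hpow, MC_inv] at hw
    have := map4_lift w
    rw [hw, map4_MC] at this
    exact N4_not_mem_K this

end BA
/-- The homomorphism `F₂ × ℤ → B₃` sending the free generators to `σ₁²`, `σ₂²` and
`1 ∈ ℤ` to `Δ²` is injective with image the pure braid group `P₃ = ker π`.
In particular `P₃ ≅ F₂ × ℤ`. -/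
theorem pureBraidGroup3_iso_f2_prod_int :
    ∃ φ : FreeGroup (Fin 2) × Multiplicative ℤ →* BraidGroup3,
      φ (FreeGroup.of 0, 1) = σ 0 ^ 2 ∧
      φ (FreeGroup.of 1, 1) = σ 1 ^ 2 ∧
      φ (1, Multiplicative.ofAdd 1) = Δsq ∧
      Function.Injective φ ∧ φ.range = πB3.ker :=
  ⟨BA.φ, BA.φ_eval0, BA.φ_eval1, BA.φ_evalΔ, BA.φ_injective, BA.range_eq_ker⟩
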